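/- arXiv:1711.09211 — 4 statements merged into one kernel-verified Lean document; each statement's English description precedes it below -/
import Mathlib

section
/- The weighted boundary map satisfies ∂_{n-1} ∘ ∂_n = 0, i.e., the weighted chain groups with weighted boundary maps form a chain complex. -/
open Finset

/-- An abstract simplicial complex on a vertex type `V`. -/
structure SComplex (V : Type*) where
  faces : Set (Finset V)
  not_empty_mem : ∅ ∉ faces
  down_closed : ∀ {s t : Finset V}, s ∈ faces → t ⊆ s → t.Nonempty → t ∈ faces

/-- The `n`-dimensional simplices (cardinality `n+1`) of a complex. -/
def SComplex.SimplexOf {V : Type*} (K : SComplex V) (n : ℕ) : Type _ :=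
  {s : Finset V // s ∈ K.faces ∧ s.card = n + 1}

/-- The `i`-th face of an `(n+1)`-simplex: delete the `i`-th vertex (in increasing order). -/
noncomputable def SComplex.face {V : Type*} [LinearOrder V] (K : SComplex V) {n : ℕ}
    (σ : K.SimplexOf (n + 1)) (i : Fin (n + 2)) : K.SimplexOf n := by
  classical
  refine ⟨σ.1.erase (σ.1.orderEmbOfFin σ.2.2 i), K.down_closed σ.2.1 (Finset.erase_subset _ _) ?_, ?_⟩
  · rw [← Finset.card_pos, Finset.card_erase_of_mem (Finset.orderEmbOfFin_mem _ _ _), σ.2.2]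
    omega
  · simp [Finset.card_erase_of_mem (Finset.orderEmbOfFin_mem _ _ _), σ.2.2]

/-- The quotient `b / a` in a commutative ring, when `a ∣ b` (an arbitrary choice of
quotient; it is unique when the ring is a domain and `a ≠ 0`). -/
noncomputable def dquot {R : Type*} [CommRing R] (b a : R) : R :=
  open Classical in if h : a ∣ b then h.choose else 0

/-- The weighted boundary map `∂ₙ : Cₙ₊₁ → Cₙ` of a weighted simplicial complex `(K, w)`
(chains in degree `n` are indexed by `n`-dimensional simplices), with coefficients pushed
forward along a ring homomorphism `g : R →+* S`. -/
noncomputable def wbnd {V R S : Type*} [LinearOrder V] [CommRing R] [CommRing S]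
    (g : R →+* S) (K : SComplex V) (w : Finset V → R) (n : ℕ) :
    (K.SimplexOf (n + 1) →₀ S) →ₗ[S] (K.SimplexOf n →₀ S) :=
  Finsupp.lsum S fun σ => LinearMap.toSpanSingleton S _
    (∑ i : Fin (n + 2),
      ((-1 : S) ^ (i : ℕ) * g (dquot (w σ.1) (w (K.face σ i).1))) •
        Finsupp.single (K.face σ i) (1 : S))

/- ===== auxiliary lemmas ===== -/

lemma dquot_spec {R : Type*} [CommRing R] {a b : R} (h : a ∣ b) : a * dquot b a = b := by
  rw [dquot, dif_pos h]; exact h.choose_spec.symm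

lemma dquot_mul {R : Type*} [CommRing R] [IsDomain R] {a b c : R} (ha : a ≠ 0)
    (hab : a ∣ b) (hbc : b ∣ c) : dquot c b * dquot b a = dquot c a := by
  apply mul_left_cancel₀ ha
  rw [show a * (dquot c b * dquot b a) = (a * dquot b a) * dquot c b by ring,
    dquot_spec hab, dquot_spec hbc, dquot_spec (hab.trans hbc)]

lemma succAbove_val {m : ℕ} (p : Fin (m + 1)) (i : Fin m) :
    ((p.succAbove i : Fin (m + 1)) : ℕ) = if (i : ℕ) < (p : ℕ) then (i : ℕ) else (i : ℕ) + 1 := by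
  simp only [Fin.succAbove, Fin.lt_def, Fin.coe_castSucc]
  split_ifs <;> simp

lemma SComplex.face_val {V : Type*} [LinearOrder V] (K : SComplex V) {n : ℕ}
    (σ : K.SimplexOf (n + 1)) (i : Fin (n + 2)) :
    (K.face σ i).1 = σ.1.erase (σ.1.orderEmbOfFin σ.2.2 i) := rfl

lemma orderEmbOfFin_erase' {V : Type*} [LinearOrder V] {s t : Finset V} {m : ℕ}
    (h : s.card = m + 1) (i : Fin (m + 1)) (ht : t = s.erase (s.orderEmbOfFin h i))
    (h' : t.card = m) (j : Fin m) :
    t.orderEmbOfFin h' j = s.orderEmbOfFin h (i.succAbove j) := by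
  subst ht
  have key := Finset.orderEmbOfFin_unique (f := fun j : Fin m => s.orderEmbOfFin h (i.succAbove j))
    h' (fun x => ?_) ((s.orderEmbOfFin h).strictMono.comp (Fin.strictMono_succAbove i))
  · exact (congrFun key j).symm
  · rw [Finset.mem_erase]
    refine ⟨fun e => Fin.succAbove_ne i x ((s.orderEmbOfFin h).injective e), Finset.orderEmbOfFin_mem _ _ _⟩

lemma SComplex.face_face {V : Type*} [LinearOrder V] (K : SComplex V) {n : ℕ}
    (σ : K.SimplexOf (n + 2)) (i : Fin (n + 3)) (j : Fin (n + 2)) :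
    (K.face (K.face σ i) j).1 =
      (σ.1.erase (σ.1.orderEmbOfFin σ.2.2 i)).erase (σ.1.orderEmbOfFin σ.2.2 (i.succAbove j)) := by
  rw [K.face_val (K.face σ i) j, orderEmbOfFin_erase' σ.2.2 i (K.face_val σ i), K.face_val σ i]

lemma SComplex.face_comm' {V : Type*} [LinearOrder V] (K : SComplex V) {n : ℕ}
    (σ : K.SimplexOf (n + 2)) (i i' : Fin (n + 3)) (j j' : Fin (n + 2))
    (h : (j : ℕ) < (i : ℕ)) (h2 : (i' : ℕ) = (j : ℕ)) (h3 : (j' : ℕ) = (i : ℕ) - 1) :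
    K.face (K.face σ i) j = K.face (K.face σ i') j' := by
  apply Subtype.ext
  rw [K.face_face, K.face_face]
  have e1 : i.succAbove j = i' := by
    apply Fin.ext; rw [succAbove_val]; simp [h, h2]
  have e2 : i'.succAbove j' = i := by
    apply Fin.ext; rw [succAbove_val]
    split_ifs <;> omega
  rw [e1, e2, Finset.erase_right_comm]

lemma wbnd_single {V R : Type*} [LinearOrder V] [CommRing R] (K : SComplex V)
    (w : Finset V → R) (n : ℕ) (σ : K.SimplexOf (n + 1)) :
    wbnd (RingHom.id R) K w n (Finsupp.single σ 1) =
      ∑ i : Fin (n + 2), ((-1 : R) ^ (i : ℕ) * dquot (w σ.1) (w (K.face σ i).1)) •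
        Finsupp.single (K.face σ i) (1 : R) := by
  simp [wbnd, LinearMap.toSpanSingleton_apply]

/-- For a weighted simplicial complex `(K, w)` over an integral domain `R`,
with all weights of simplices nonzero (and the divisibility condition `w τ ∣ w σ` for
`τ ⊆ σ`), the weighted boundary maps satisfy `∂ₙ ∘ ∂ₙ₊₁ = 0`; i.e. the weighted chain
groups form a chain complex. -/
theorem weighted_boundary_squared_zero {V R : Type*} [LinearOrder V]
    [CommRing R] [IsDomain R] (K : SComplex V) (w : Finset V → R)
    (hw0 : ∀ s ∈ K.faces, w s ≠ 0)
    (hdvd : ∀ {s t : Finset V}, s ∈ K.faces → t ∈ K.faces → t ⊆ s → w t ∣ w s)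
    (n : ℕ) :
    (wbnd (RingHom.id R) K w n).comp (wbnd (RingHom.id R) K w (n + 1)) = 0 := by
  have key : ∀ σ : K.SimplexOf (n + 2),
      wbnd (RingHom.id R) K w n (wbnd (RingHom.id R) K w (n + 1) (Finsupp.single σ 1)) = 0 := by
    intro σ
    rw [wbnd_single, map_sum]
    simp only [map_smul, wbnd_single, Finset.smul_sum, smul_smul]
    have hsum : ∀ (G : Fin (n + 3) → Fin (n + 2) → (K.SimplexOf n →₀ R)),
        (∑ i, ∑ j, G i j) = ∑ p : Fin (n + 3) × Fin (n + 2), G p.1 p.2 :=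
      fun G => (Fintype.sum_prod_type (f := fun p => G p.1 p.2)).symm
    rw [hsum]
    have hcoef : ∀ (i : Fin (n + 3)) (j : Fin (n + 2)),
        ((-1 : R) ^ (i : ℕ) * dquot (w σ.1) (w (K.face σ i).1)) *
          ((-1 : R) ^ (j : ℕ) * dquot (w (K.face σ i).1) (w (K.face (K.face σ i) j).1)) =
        (-1 : R) ^ ((i : ℕ) + (j : ℕ)) * dquot (w σ.1) (w (K.face (K.face σ i) j).1) := by
      intro i j
      have hd := dquot_mul (hw0 _ (K.face (K.face σ i) j).2.1)
        (hdvd (K.face σ i).2.1 (K.face (K.face σ i) j).2.1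
          (by rw [K.face_val (K.face σ i) j]; exact Finset.erase_subset _ _))
        (hdvd σ.2.1 (K.face σ i).2.1
          (by rw [K.face_val σ i]; exact Finset.erase_subset _ _))
      rw [pow_add, ← hd]; ring
    simp only [hcoef]
    -- involution
    set F : Fin (n + 3) × Fin (n + 2) → (K.SimplexOf n →₀ R) := fun p =>
      ((-1 : R) ^ ((p.1 : ℕ) + (p.2 : ℕ)) * dquot (w σ.1) (w (K.face (K.face σ p.1) p.2).1)) •
        Finsupp.single (K.face (K.face σ p.1) p.2) (1 : R) with hF
    show ∑ p : Fin (n + 3) × Fin (n + 2), F p = 0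
    set g : Fin (n + 3) × Fin (n + 2) → Fin (n + 3) × Fin (n + 2) := fun p =>
      if h : (p.2 : ℕ) < (p.1 : ℕ) then (⟨(p.2 : ℕ), by omega⟩, ⟨(p.1 : ℕ) - 1, by omega⟩)
      else (⟨(p.2 : ℕ) + 1, by omega⟩, ⟨(p.1 : ℕ), by omega⟩) with hg
    have gval : ∀ p : Fin (n + 3) × Fin (n + 2),
        (((p.2 : ℕ) < (p.1 : ℕ)) → ((g p).1 : ℕ) = (p.2 : ℕ) ∧ ((g p).2 : ℕ) = (p.1 : ℕ) - 1) ∧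
        ((¬ ((p.2 : ℕ) < (p.1 : ℕ))) → ((g p).1 : ℕ) = (p.2 : ℕ) + 1 ∧ ((g p).2 : ℕ) = (p.1 : ℕ)) := by
      intro p
      constructor
      · intro h; rw [hg]; simp only; rw [dif_pos h]; exact ⟨rfl, rfl⟩
      · intro h; rw [hg]; simp only; rw [dif_neg h]; exact ⟨rfl, rfl⟩
    have cancel : ∀ (i i' : Fin (n + 3)) (j j' : Fin (n + 2)), (j : ℕ) < (i : ℕ) →
        (i' : ℕ) = (j : ℕ) → (j' : ℕ) = (i : ℕ) - 1 → F (i, j) + F (i', j') = 0 := by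
      intro i i' j j' h h2 h3
      have hface := K.face_comm' σ i i' j j' h h2 h3
      rw [hF]; simp only
      rw [← hface, ← add_smul]
      convert zero_smul R _ using 2
      have hpar : (i : ℕ) + (j : ℕ) = ((i' : ℕ) + (j' : ℕ)) + 1 := by omega
      rw [hpar, pow_succ]; ring
    have hfg : ∀ p, F p + F (g p) = 0 := by
      intro p
      by_cases h : (p.2 : ℕ) < (p.1 : ℕ)
      · obtain ⟨v1, v2⟩ := (gval p).1 h
        have := cancel p.1 (g p).1 p.2 (g p).2 h v1 v2
        simpa using this
      · obtain ⟨v1, v2⟩ := (gval p).2 h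
        have := cancel (g p).1 p.1 (g p).2 p.2 (by omega) (by omega) (by omega)
        have goal := this
        rw [add_comm] at goal
        simpa using goal
    have hgne : ∀ p : Fin (n + 3) × Fin (n + 2), g p ≠ p := by
      intro p heq
      by_cases h : (p.2 : ℕ) < (p.1 : ℕ)
      · obtain ⟨v1, v2⟩ := (gval p).1 h
        rw [heq] at v1
        omega
      · obtain ⟨v1, v2⟩ := (gval p).2 h
        rw [heq] at v1
        omega
    have hginv : ∀ p, g (g p) = p := by
      intro p
      by_cases h : (p.2 : ℕ) < (p.1 : ℕ)
      · obtain ⟨v1, v2⟩ := (gval p).1 h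
        obtain ⟨w1, w2⟩ := (gval (g p)).2 (by omega)
        exact Prod.ext (Fin.ext (by omega)) (Fin.ext (by omega))
      · obtain ⟨v1, v2⟩ := (gval p).2 h
        obtain ⟨w1, w2⟩ := (gval (g p)).1 (by omega)
        exact Prod.ext (Fin.ext (by omega)) (Fin.ext (by omega))
    exact Finset.sum_ninvolution g hfg (fun p _ => hgne p) (fun p => Finset.mem_univ _) hginv
  apply Finsupp.lhom_ext
  intro σ r
  rw [LinearMap.comp_apply, LinearMap.zero_apply]
  have hr : (Finsupp.single σ r) = r • Finsupp.single σ (1 : R) := by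
    rw [Finsupp.smul_single, smul_eq_mul, mul_one]
  rw [hr, map_smul, map_smul, key, smul_zero]
end

section
/- Let (K,w) be a WSC with K = K₀ ∪ K₁ for subcomplexes K₀, K₁, and let A = K₀ ∩ K₁. Then the sequence of chain complexes 0 → C_*(A,w) → C_*(K₀,w) ⊕ C_*(K₁,w) → C_*(K,w) → 0, with maps φ(c) = (i_♯ c, -j_♯ c) and ψ(d,e) = k_♯ d + l_♯ e induced by inclusions, is a short exact sequence. -/
open Finset

/-- The chain map induced by an inclusion of simplicial complexes. -/
noncomputable def inclMap {V S : Type*} [CommRing S] {K K' : SComplex V}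
    (h : K.faces ⊆ K'.faces) (n : ℕ) :
    (K.SimplexOf n →₀ S) →ₗ[S] (K'.SimplexOf n →₀ S) :=
  Finsupp.lmapDomain S S fun σ => (⟨σ.1, h σ.2.1, σ.2.2⟩ : K'.SimplexOf n)

section Aux

variable {V S : Type*} [CommRing S] {K K' : SComplex V}

/-- The inclusion of simplices induced by an inclusion of complexes. -/
def sincl (h : K.faces ⊆ K'.faces) (n : ℕ) (σ : K.SimplexOf n) : K'.SimplexOf n :=
  ⟨σ.1, h σ.2.1, σ.2.2⟩

lemma sincl_injective (h : K.faces ⊆ K'.faces) (n : ℕ) :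
    Function.Injective (sincl h n) := by
  intro a b hab
  exact Subtype.ext (congrArg (fun σ : K'.SimplexOf n => σ.1) hab)

@[simp] lemma sincl_val (h : K.faces ⊆ K'.faces) (n : ℕ) (σ : K.SimplexOf n) :
    (sincl h n σ).1 = σ.1 := rfl

lemma inclMap_eq (h : K.faces ⊆ K'.faces) (n : ℕ) (c : K.SimplexOf n →₀ S) :
    inclMap h n c = Finsupp.mapDomain (sincl h n) c := rfl

open Classical in
lemma inclMap_apply (h : K.faces ⊆ K'.faces) (n : ℕ) (c : K.SimplexOf n →₀ S)
    (τ : K'.SimplexOf n) :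
    inclMap h n c τ = if hm : τ.1 ∈ K.faces then c ⟨τ.1, hm, τ.2.2⟩ else 0 := by
  rw [inclMap_eq]
  split_ifs with hm
  · exact Finsupp.mapDomain_apply (sincl_injective h n) c ⟨τ.1, hm, τ.2.2⟩
  · rw [Finsupp.mapDomain_notin_range]
    rintro ⟨σ, rfl⟩
    exact hm σ.2.1

lemma inclMap_injective (h : K.faces ⊆ K'.faces) (n : ℕ) :
    Function.Injective (inclMap (S := S) h n) := by
  intro a b hab
  exact Finsupp.mapDomain_injective (sincl_injective h n) hab

lemma inclMap_comp {K'' : SComplex V} (hKK' : K.faces ⊆ K'.faces)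
    (hK'K'' : K'.faces ⊆ K''.faces) (n : ℕ) :
    (inclMap (S := S) hK'K'' n).comp (inclMap hKK' n) =
      inclMap (fun _ hs => hK'K'' (hKK' hs)) n := by
  refine Finsupp.lhom_ext fun a b => ?_
  simp only [LinearMap.comp_apply, inclMap_eq, Finsupp.mapDomain_single]
  exact ((inclMap_eq (S := S) (K := K) (K' := K'') _ n (Finsupp.single a b)).trans
    Finsupp.mapDomain_single).symm

lemma wbnd_comm {V R : Type*} [LinearOrder V] [CommRing R] {K K' : SComplex V}
    (h : K.faces ⊆ K'.faces) (w : Finset V → R) (n : ℕ) :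
    (inclMap (S := R) h n).comp (wbnd (RingHom.id R) K w n) =
      (wbnd (RingHom.id R) K' w n).comp (inclMap h (n + 1)) := by
  refine Finsupp.lhom_ext fun σ b => ?_
  have hface : ∀ i : Fin (n + 2),
      K'.face (sincl h (n + 1) σ) i = sincl h n (K.face σ i) := fun i => Subtype.ext rfl
  have hf1 : ∀ i : Fin (n + 2), (K'.face (sincl h (n + 1) σ) i).1 = (K.face σ i).1 :=
    fun i => congrArg Subtype.val (hface i)
  simp only [LinearMap.comp_apply, wbnd, Finsupp.lsum_single,
    LinearMap.toSpanSingleton_apply, inclMap_eq]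
  have : Finsupp.mapDomain (sincl h (n + 1)) (Finsupp.single σ b)
      = Finsupp.single (sincl h (n + 1) σ) b := Finsupp.mapDomain_single
  rw [this, Finsupp.lsum_single, LinearMap.toSpanSingleton_apply]
  rw [Finsupp.mapDomain_smul, Finsupp.mapDomain_finset_sum]
  congr 1
  refine Finset.sum_congr rfl fun i _ => ?_
  rw [Finsupp.mapDomain_smul, Finsupp.mapDomain_single, ← hface i, hf1 i]
  rfl

end Aux

/-- Let `(K, w)` be a weighted simplicial complex over an integral
domain, with subcomplexes `K₀, K₁` such that `K = K₀ ∪ K₁`, and `A = K₀ ∩ K₁`.  Then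
`0 → C_*(A,w) → C_*(K₀,w) ⊕ C_*(K₁,w) → C_*(K,w) → 0`, with the maps
`φ c = (i♯ c, -(j♯ c))` and `ψ (d, e) = k♯ d + l♯ e` induced by the inclusions,
is a short exact sequence of chain complexes: in each degree `φ` is injective, `ψ` is
surjective, `im φ = ker ψ`, and `φ`, `ψ` are chain maps. -/
theorem mayer_vietoris_short_exact {V R : Type*} [LinearOrder V] [CommRing R] [IsDomain R]
    (K K₀ K₁ A : SComplex V)
    (h0 : K₀.faces ⊆ K.faces) (h1 : K₁.faces ⊆ K.faces)
    (hA0 : A.faces ⊆ K₀.faces) (hA1 : A.faces ⊆ K₁.faces)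
    (hunion : K.faces = K₀.faces ∪ K₁.faces) (hinter : A.faces = K₀.faces ∩ K₁.faces)
    (w : Finset V → R) (hw0 : ∀ s ∈ K.faces, w s ≠ 0)
    (hdvd : ∀ {s t : Finset V}, s ∈ K.faces → t ∈ K.faces → t ⊆ s → w t ∣ w s) :
    (∀ n, Function.Injective
        ⇑(((inclMap (S := R) hA0 n).prod (-(inclMap (S := R) hA1 n)))))
    ∧ (∀ n, Function.Exact
        ⇑((inclMap (S := R) hA0 n).prod (-(inclMap (S := R) hA1 n)))
        ⇑((inclMap (S := R) h0 n).coprod (inclMap (S := R) h1 n)))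
    ∧ (∀ n, Function.Surjective ⇑((inclMap (S := R) h0 n).coprod (inclMap (S := R) h1 n)))
    ∧ (∀ n, (inclMap (S := R) hA0 n).comp (wbnd (RingHom.id R) A w n) =
        (wbnd (RingHom.id R) K₀ w n).comp (inclMap hA0 (n + 1)))
    ∧ (∀ n, (inclMap (S := R) hA1 n).comp (wbnd (RingHom.id R) A w n) =
        (wbnd (RingHom.id R) K₁ w n).comp (inclMap hA1 (n + 1)))
    ∧ (∀ n, (inclMap (S := R) h0 n).comp (wbnd (RingHom.id R) K₀ w n) =
        (wbnd (RingHom.id R) K w n).comp (inclMap h0 (n + 1)))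
    ∧ (∀ n, (inclMap (S := R) h1 n).comp (wbnd (RingHom.id R) K₁ w n) =
        (wbnd (RingHom.id R) K w n).comp (inclMap h1 (n + 1))) := by
  refine ⟨?_, ?_, ?_, fun n => wbnd_comm hA0 w n, fun n => wbnd_comm hA1 w n,
    fun n => wbnd_comm h0 w n, fun n => wbnd_comm h1 w n⟩
  · -- injectivity
    intro n a b hab
    have h1 := congrArg Prod.fst hab
    simp only [LinearMap.prod_apply, Pi.prod] at h1
    exact inclMap_injective hA0 n h1
  · -- exactness
    intro n
    rintro ⟨d, e⟩
    constructor
    · intro hsum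
      simp only [LinearMap.coprod_apply] at hsum
      have key : ∀ τ : K₀.SimplexOf n, d τ ≠ 0 → τ.1 ∈ A.faces := by
        intro τ hτ
        have hthis := DFunLike.congr_fun hsum (sincl h0 n τ)
        simp only [Finsupp.coe_add, Pi.add_apply, Finsupp.coe_zero, Pi.zero_apply] at hthis
        rw [inclMap_eq, Finsupp.mapDomain_apply (sincl_injective h0 n),
          inclMap_apply] at hthis
        simp only [sincl_val] at hthis
        rw [hinter]
        refine ⟨τ.2.1, ?_⟩
        by_contra hm
        erw [dif_neg hm, add_zero] at hthis
        exact hτ hthis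
      have hsupp : (d.support : Set (K₀.SimplexOf n)) ⊆ Set.range (sincl hA0 n) := by
        intro τ hτ
        have hmA := key τ (Finsupp.mem_support_iff.mp hτ)
        exact ⟨⟨τ.1, hmA, τ.2.2⟩, Subtype.ext rfl⟩
      refine ⟨Finsupp.comapDomain (sincl hA0 n) d (sincl_injective hA0 n).injOn, ?_⟩
      have hd : inclMap (S := R) hA0 n
          (Finsupp.comapDomain (sincl hA0 n) d (sincl_injective hA0 n).injOn) = d := by
        rw [inclMap_eq]
        exact Finsupp.mapDomain_comapDomain _ (sincl_injective hA0 n) d hsupp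
      have he : -(inclMap (S := R) hA1 n
          (Finsupp.comapDomain (sincl hA0 n) d (sincl_injective hA0 n).injOn)) = e := by
        ext τ
        have hthis := DFunLike.congr_fun hsum (sincl h1 n τ)
        simp only [Finsupp.coe_add, Pi.add_apply, Finsupp.coe_zero, Pi.zero_apply] at hthis
        rw [inclMap_eq (h := h1), Finsupp.mapDomain_apply (sincl_injective h1 n),
          inclMap_apply] at hthis
        simp only [sincl_val] at hthis
        rw [Finsupp.neg_apply, inclMap_apply]
        split_ifs with hm
        · erw [dif_pos (hA0 hm)] at hthis
          erw [Finsupp.comapDomain_apply]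
          exact neg_eq_of_add_eq_zero_right hthis
        · have hm0 : τ.1 ∉ K₀.faces := fun hk0 => hm (hinter ▸ ⟨hk0, τ.2.1⟩)
          erw [dif_neg hm0, zero_add] at hthis
          rw [hthis, neg_zero]
      exact Prod.ext (by simpa using hd) (by simpa using he)
    · rintro ⟨c, hc⟩
      rw [← hc]
      simp only [LinearMap.coprod_apply, LinearMap.prod_apply, Pi.prod, Function.prod,
        LinearMap.neg_apply, map_neg]
      have hcomp : inclMap (S := R) h0 n ((inclMap hA0 n) c) =
          inclMap h1 n ((inclMap hA1 n) c) := by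
        have t1 := DFunLike.congr_fun (inclMap_comp (S := R) hA0 h0 n) c
        have t2 := DFunLike.congr_fun (inclMap_comp (S := R) hA1 h1 n) c
        rw [LinearMap.comp_apply] at t1 t2
        exact t1.trans t2.symm
      rw [hcomp, add_neg_cancel]
  · -- surjectivity
    intro n f
    induction f using Finsupp.induction_linear with
    | zero => exact ⟨0, map_zero _⟩
    | add f g hf hg =>
      obtain ⟨x, hx⟩ := hf
      obtain ⟨y, hy⟩ := hg
      exact ⟨x + y, by rw [map_add, hx, hy]⟩
    | single τ b =>
      rcases (hunion ▸ τ.2.1 : τ.1 ∈ K₀.faces ∪ K₁.faces) with hm | hm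
      · refine ⟨(Finsupp.single ⟨τ.1, hm, τ.2.2⟩ b, 0), ?_⟩
        simp only [LinearMap.coprod_apply, map_zero, add_zero, inclMap_eq,
          Finsupp.mapDomain_single]
        erw [Finsupp.mapDomain_single]
        exact congrArg (fun x : K.SimplexOf n => Finsupp.single x b) (Subtype.ext rfl)
      · refine ⟨(0, Finsupp.single ⟨τ.1, hm, τ.2.2⟩ b), ?_⟩
        simp only [LinearMap.coprod_apply, map_zero, zero_add, inclMap_eq,
          Finsupp.mapDomain_single]
        erw [Finsupp.mapDomain_single]
        exact congrArg (fun x : K.SimplexOf n => Finsupp.single x b) (Subtype.ext rfl)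
end

section
/- Let (K,w) be a WSC with all weights nonzero, over a field 𝔽 (weights in 𝔽). Let ∂ and ∂_w be the unweighted and weighted boundary maps on C_n(K;𝔽). Then the map ψ(Σ a_i σ_i) = Σ (a_i / w(σ_i)) σ_i is an 𝔽-linear isomorphism ker ∂ → ker ∂_w. -/
open Finset

/-- The weighted boundary map over a field `F`, with weight function `w : K → F`:
`∂_w σ = Σᵢ (w σ / w (dᵢ σ)) (-1)ⁱ dᵢ σ`.  Taking `w = 1` gives the ordinary
(unweighted) simplicial boundary map. -/
noncomputable def fbnd {V F : Type*} [LinearOrder V] [Field F]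
    (K : SComplex V) (w : Finset V → F) (n : ℕ) :
    (K.SimplexOf (n + 1) →₀ F) →ₗ[F] (K.SimplexOf n →₀ F) :=
  Finsupp.lsum F fun σ => LinearMap.toSpanSingleton F _
    (∑ i : Fin (n + 2),
      ((-1 : F) ^ (i : ℕ) * (w σ.1 / w (K.face σ i).1)) •
        Finsupp.single (K.face σ i) (1 : F))

/-- The linear map `ψ (Σ aᵢ σᵢ) = Σ (aᵢ / w σᵢ) σᵢ` on weighted chains over a field. -/
noncomputable def psiMap {V F : Type*} [LinearOrder V] [Field F]
    (K : SComplex V) (w : Finset V → F) (n : ℕ) :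
    (K.SimplexOf n →₀ F) →ₗ[F] (K.SimplexOf n →₀ F) :=
  Finsupp.lsum F fun σ => LinearMap.toSpanSingleton F _
    (Finsupp.single σ ((w σ.1)⁻¹))


section Aux
variable {V F : Type*} [LinearOrder V] [Field F]

lemma psiMap_single (K : SComplex V) (w : Finset V → F) (n : ℕ) (σ : K.SimplexOf n) (a : F) :
    psiMap K w n (Finsupp.single σ a) = Finsupp.single σ (a * (w σ.1)⁻¹) := by
  simp only [psiMap, Finsupp.lsum_single, LinearMap.toSpanSingleton_apply,
    Finsupp.smul_single, smul_eq_mul]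

lemma fbnd_single (K : SComplex V) (w : Finset V → F) (n : ℕ) (σ : K.SimplexOf (n+1)) (a : F) :
    fbnd K w n (Finsupp.single σ a)
      = ∑ i : Fin (n + 2),
          Finsupp.single (K.face σ i) (a * ((-1 : F) ^ (i : ℕ) * (w σ.1 / w (K.face σ i).1))) := by
  simp only [fbnd, Finsupp.lsum_single, LinearMap.toSpanSingleton_apply, Finset.smul_sum,
    smul_smul, Finsupp.smul_single, smul_eq_mul, mul_one]

lemma comm1 (K : SComplex V) (w : Finset V → F) (hw0 : ∀ s ∈ K.faces, w s ≠ 0) (n : ℕ) :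
    (fbnd K w n).comp (psiMap K w (n+1)) = (psiMap K w n).comp (fbnd K (fun _ => (1:F)) n) := by
  apply Finsupp.lhom_ext; intro σ a
  simp only [LinearMap.comp_apply, psiMap_single, fbnd_single, map_sum]
  refine Finset.sum_congr rfl fun i _ => ?_
  congr 1
  have hσ : w σ.1 ≠ 0 := hw0 _ σ.2.1
  simp only [one_div, inv_one, mul_one, div_eq_mul_inv]
  rw [show a * (w σ.1)⁻¹ * ((-1:F)^(i:ℕ) * (w σ.1 * (w (K.face σ i).1)⁻¹))
      = a * (-1:F)^(i:ℕ) * (w (K.face σ i).1)⁻¹ * ((w σ.1)⁻¹ * w σ.1) from by ring,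
    inv_mul_cancel₀ hσ, mul_one]

lemma comm2 (K : SComplex V) (w : Finset V → F) (hw0 : ∀ s ∈ K.faces, w s ≠ 0) (n : ℕ) :
    (fbnd K (fun _ => (1:F)) n).comp (psiMap K (fun s => (w s)⁻¹) (n+1))
      = (psiMap K (fun s => (w s)⁻¹) n).comp (fbnd K w n) := by
  apply Finsupp.lhom_ext; intro σ a
  simp only [LinearMap.comp_apply, psiMap_single, fbnd_single, map_sum]
  refine Finset.sum_congr rfl fun i _ => ?_
  congr 1
  have hd : w (K.face σ i).1 ≠ 0 := hw0 _ (K.face σ i).2.1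
  field_simp

lemma psi_inv (K : SComplex V) (w : Finset V → F) (hw0 : ∀ s ∈ K.faces, w s ≠ 0) (n : ℕ) :
    (psiMap K (fun s => (w s)⁻¹) n).comp (psiMap K w n) = LinearMap.id := by
  apply Finsupp.lhom_ext; intro σ a
  have hσ : w σ.1 ≠ 0 := hw0 _ σ.2.1
  simp only [LinearMap.comp_apply, psiMap_single, LinearMap.id_apply, inv_inv,
    mul_assoc, inv_mul_cancel₀ hσ, mul_one]

lemma psi_inv' (K : SComplex V) (w : Finset V → F) (hw0 : ∀ s ∈ K.faces, w s ≠ 0) (n : ℕ) :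
    (psiMap K w n).comp (psiMap K (fun s => (w s)⁻¹) n) = LinearMap.id := by
  apply Finsupp.lhom_ext; intro σ a
  have hσ : w σ.1 ≠ 0 := hw0 _ σ.2.1
  simp only [LinearMap.comp_apply, psiMap_single, LinearMap.id_apply, inv_inv,
    mul_assoc, mul_inv_cancel₀ hσ, mul_one]

end Aux

/-- Let `(K, w)` be a weighted simplicial complex over a field `F`
with all weights nonzero.  The map `ψ (Σ aᵢ σᵢ) = Σ (aᵢ / w σᵢ) σᵢ` is an `F`-linear
isomorphism from `ker ∂` (ordinary boundary, weight `1`) onto `ker ∂_w` (weighted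
boundary): it is injective and carries `ker ∂` exactly onto `ker ∂_w`. -/
theorem psi_iso_ker_boundary_ker_weighted_boundary {V F : Type*} [LinearOrder V] [Field F]
    (K : SComplex V) (w : Finset V → F) (hw0 : ∀ s ∈ K.faces, w s ≠ 0) (n : ℕ) :
    Function.Injective ⇑(psiMap K w (n + 1)) ∧
    Submodule.map (psiMap K w (n + 1)) (LinearMap.ker (fbnd K (fun _ => (1 : F)) n)) =
      LinearMap.ker (fbnd K w n) := by
  have hinj : Function.Injective ⇑(psiMap K w (n + 1)) := by
    have h := psi_inv K w hw0 (n+1)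
    intro x y hxy
    have := congrArg (fun f => f x) h
    have h2 := congrArg (fun f => f y) h
    simp only [LinearMap.comp_apply, LinearMap.id_apply] at this h2
    rw [← this, ← h2, hxy]
  refine ⟨hinj, ?_⟩
  apply le_antisymm
  · rintro x ⟨y, hy, rfl⟩
    have h := congrArg (fun f => f y) (comm1 K w hw0 n)
    simp only [LinearMap.comp_apply] at h
    simp only [LinearMap.mem_ker] at hy ⊢
    rw [h, hy, map_zero]
  · intro x hx
    simp only [LinearMap.mem_ker] at hx
    refine ⟨psiMap K (fun s => (w s)⁻¹) (n+1) x, ?_, ?_⟩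
    · have h := congrArg (fun f => f x) (comm2 K w hw0 n)
      simp only [LinearMap.comp_apply] at h
      simp only [SetLike.mem_coe, LinearMap.mem_ker]
      rw [h, hx, map_zero]
    · have h := congrArg (fun f => f x) (psi_inv' K w hw0 (n+1))
      simpa using h
end

section
/- Let (K,w) be a WSC with all weights nonzero, over a field 𝔽. Then im ∂ ≅ im ∂_w as 𝔽-vector spaces, where ∂ and ∂_w are the unweighted and weighted boundary maps C_n(K;𝔽) → C_{n-1}(K;𝔽). -/
open Finset

section Aux
variable {V F : Type*} [LinearOrder V] [Field F] (K : SComplex V)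

/-- Diagonal scaling map on chains. -/
noncomputable def diagMap {m : ℕ} (u : K.SimplexOf m → F) :
    (K.SimplexOf m →₀ F) →ₗ[F] (K.SimplexOf m →₀ F) :=
  Finsupp.lsum F fun σ => LinearMap.toSpanSingleton F _ (Finsupp.single σ (u σ))

@[simp] lemma diagMap_single {m : ℕ} (u : K.SimplexOf m → F) (σ : K.SimplexOf m) (c : F) :
    diagMap K u (Finsupp.single σ c) = Finsupp.single σ (c * u σ) := by
  simp [diagMap, LinearMap.toSpanSingleton_apply, Finsupp.smul_single]

lemma diagMap_comp {m : ℕ} (u v : K.SimplexOf m → F) (h : ∀ σ, v σ * u σ = 1) :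
    (diagMap K u).comp (diagMap K v) = LinearMap.id := by
  apply Finsupp.lhom_ext
  intro σ c
  rw [LinearMap.comp_apply, diagMap_single, diagMap_single, mul_assoc, h σ, mul_one,
    LinearMap.id_apply]

/-- Diagonal scaling equivalence on chains. -/
noncomputable def diagEquiv {m : ℕ} (u : K.SimplexOf m → F) (hu : ∀ σ, u σ ≠ 0) :
    (K.SimplexOf m →₀ F) ≃ₗ[F] (K.SimplexOf m →₀ F) :=
  LinearEquiv.ofLinear (diagMap K u) (diagMap K (fun σ => (u σ)⁻¹))
    (diagMap_comp K u _ (fun σ => inv_mul_cancel₀ (hu σ)))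
    (diagMap_comp K _ u (fun σ => mul_inv_cancel₀ (hu σ)))

end Aux

/-- Let `(K, w)` be a weighted simplicial complex over a field `F`
with all weights nonzero.  Then `im ∂ ≅ im ∂_w` as `F`-vector spaces, where `∂` is the
ordinary (weight-`1`) boundary map and `∂_w` the weighted boundary map. -/
theorem image_boundary_iso_image_weighted_boundary {V F : Type*} [LinearOrder V] [Field F]
    (K : SComplex V) (w : Finset V → F) (hw0 : ∀ s ∈ K.faces, w s ≠ 0) (n : ℕ) :
    Nonempty (↥(LinearMap.range (fbnd K (fun _ => (1 : F)) n)) ≃ₗ[F]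
      ↥(LinearMap.range (fbnd K w n))) := by
  classical
  have hw : ∀ m (σ : K.SimplexOf m), w σ.1 ≠ 0 := fun m σ => hw0 σ.1 σ.2.1
  set D : (K.SimplexOf (n+1) →₀ F) ≃ₗ[F] (K.SimplexOf (n+1) →₀ F) :=
    diagEquiv K (fun σ => w σ.1) (hw _)
  set E : (K.SimplexOf n →₀ F) ≃ₗ[F] (K.SimplexOf n →₀ F) :=
    diagEquiv K (fun σ => (w σ.1)⁻¹) (fun σ => inv_ne_zero (hw _ σ))
  have key : fbnd K w n =
      (E : (K.SimplexOf n →₀ F) →ₗ[F] _) ∘ₗ fbnd K (fun _ => (1:F)) n ∘ₗ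
        (D : (K.SimplexOf (n+1) →₀ F) →ₗ[F] _) := by
    apply Finsupp.lhom_ext
    intro σ c
    simp only [LinearMap.comp_apply, LinearEquiv.coe_coe, D, E, diagEquiv,
      LinearEquiv.ofLinear_apply, diagMap_single]
    simp only [fbnd, Finsupp.lsum_single, LinearMap.toSpanSingleton_apply,
      Finset.smul_sum, Finsupp.smul_single, map_sum, diagMap_single]
    refine Finset.sum_congr rfl fun i _ => ?_
    congr 1
    field_simp
    ring
  have hrange : LinearMap.range (fbnd K w n) =
      (LinearMap.range (fbnd K (fun _ => (1:F)) n)).map (E : (K.SimplexOf n →₀ F) →ₗ[F] _) := by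
    rw [key, LinearMap.range_comp, LinearMap.range_comp, LinearEquiv.range, Submodule.map_top]
  exact ⟨(E.submoduleMap (LinearMap.range (fbnd K (fun _ => (1:F)) n))).trans
    (LinearEquiv.ofEq _ _ hrange.symm)⟩
end
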